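/- Let ρ_1, …, ρ_r be density matrices on ℂ^d satisfying Condition (LI): range(ρ_i) ∩ range(ρ_j) = {0} for all i ≠ j. Then for all sufficiently large n, the subspaces range(ρ_1^{⊗n}), …, range(ρ_r^{⊗n}) of ℂ^{d^n} are linearly independent as a family, i.e. their sum is a direct sum (equivalently, if x_i ∈ range(ρ_i^{⊗n}) for each i and Σ_i x_i = 0, then all x_i = 0). -/

import Mathlib

open Matrix Filter
open scoped ComplexOrder

noncomputable section

/-- A density matrix: positive semidefinite with trace 1. -/
def IsDensity {d : ℕ} (ρ : Matrix (Fin d) (Fin d) ℂ) : Prop :=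
  ρ.PosSemidef ∧ ρ.trace = 1

/-- Real power of a Hermitian matrix via the spectral decomposition
(convention `(0:ℝ) ^ (0:ℝ) = 1`, as for `Real.rpow`). Returns `0` on
non-Hermitian input. -/
def mpow {ι : Type*} [Fintype ι] [DecidableEq ι] (ρ : Matrix ι ι ℂ) (s : ℝ) :
    Matrix ι ι ℂ :=
  if hρ : ρ.IsHermitian then
    (hρ.eigenvectorUnitary : Matrix ι ι ℂ) *
      Matrix.diagonal (fun i => ((hρ.eigenvalues i ^ s : ℝ) : ℂ)) *
      star (hρ.eigenvectorUnitary : Matrix ι ι ℂ)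
  else 0

/-- `inf_{s ∈ [0,1]} tr(ρ^{1-s} σ^s)`. -/
def qcbAffinity {d : ℕ} (ρ σ : Matrix (Fin d) (Fin d) ℂ) : ℝ :=
  sInf ((fun s : ℝ => (mpow ρ (1 - s) * mpow σ s).trace.re) '' Set.Icc 0 1)

/-- The binary quantum Chernoff bound. -/
def xiQCB {d : ℕ} (ρ σ : Matrix (Fin d) (Fin d) ℂ) : ℝ :=
  -Real.log (qcbAffinity ρ σ)

/-- The multiple quantum Chernoff bound: worst case over distinct pairs. -/
def xiQCBmulti {d r : ℕ} (ρ : Fin r → Matrix (Fin d) (Fin d) ℂ) : ℝ :=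
  sInf {x | ∃ i j, i ≠ j ∧ x = xiQCB (ρ i) (ρ j)}

/-- The `n`-fold Kronecker (tensor) power of a matrix. -/
def tensorPow {d m : ℕ} (A : Matrix (Fin d) (Fin m) ℂ) (n : ℕ) :
    Matrix (Fin n → Fin d) (Fin n → Fin m) ℂ :=
  fun x y => ∏ k, A (x k) (y k)

/-- A POVM (quantum detector) with `r` outcomes. -/
def IsPOVM {ι : Type*} [Fintype ι] [DecidableEq ι] {r : ℕ}
    (E : Fin r → Matrix ι ι ℂ) : Prop :=
  (∀ i, (E i).PosSemidef) ∧ ∑ i, E i = 1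

end

/-- The column space (support) of a matrix. -/
noncomputable def matRange {m k : Type*} [Fintype k] (A : Matrix m k ℂ) :
    Submodule ℂ (m → ℂ) :=
  LinearMap.range A.mulVecLin

lemma tensorPow_mul {d m e : ℕ} (A : Matrix (Fin d) (Fin m) ℂ) (B : Matrix (Fin m) (Fin e) ℂ)
    (n : ℕ) : tensorPow A n * tensorPow B n = tensorPow (A * B) n := by
  ext x z
  simp only [tensorPow, Matrix.mul_apply]
  rw [Finset.prod_univ_sum, Fintype.piFinset_univ]
  exact Finset.sum_congr rfl fun y _ => (Finset.prod_mul_distrib).symm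

lemma tensorPow_one {d : ℕ} (n : ℕ) : tensorPow (1 : Matrix (Fin d) (Fin d) ℂ) n = 1 := by
  ext x y
  simp only [tensorPow, Matrix.one_apply]
  by_cases h : x = y
  · simp [h]
  · obtain ⟨k, hk⟩ : ∃ k, x k ≠ y k := by
      by_contra hc; push_neg at hc; exact h (funext hc)
    rw [if_neg h]
    exact Finset.prod_eq_zero (Finset.mem_univ k) (by simp [hk])

lemma tensorPow_conjTranspose {d m : ℕ} (A : Matrix (Fin d) (Fin m) ℂ) (n : ℕ) :
    (tensorPow A n)ᴴ = tensorPow Aᴴ n := by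
  ext x y
  simp [tensorPow, Matrix.conjTranspose_apply, map_prod]

lemma tensorPow_diagonal {d : ℕ} (f : Fin d → ℂ) (n : ℕ) :
    tensorPow (Matrix.diagonal f) n = Matrix.diagonal (fun x => ∏ k, f (x k)) := by
  ext x y
  simp only [tensorPow, Matrix.diagonal_apply]
  by_cases h : x = y
  · subst h; simp
  · obtain ⟨k, hk⟩ : ∃ k, x k ≠ y k := by
      by_contra hc; push_neg at hc; exact h (funext hc)
    rw [if_neg h]
    exact Finset.prod_eq_zero (Finset.mem_univ k) (by simp [hk])

lemma tensorPow_star {d : ℕ} (A : Matrix (Fin d) (Fin d) ℂ) (n : ℕ) :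
    tensorPow (star A) n = star (tensorPow A n) := by
  rw [Matrix.star_eq_conjTranspose, Matrix.star_eq_conjTranspose, tensorPow_conjTranspose]

lemma tensorPow_le_smul_one {d : ℕ} {B : Matrix (Fin d) (Fin d) ℂ} (hB : B.PosSemidef)
    {t : ℝ} (ht : ∀ i, hB.1.eigenvalues i ≤ t) (n : ℕ) :
    (((t : ℂ)^n) • (1 : Matrix (Fin n → Fin d) (Fin n → Fin d) ℂ) - tensorPow B n).PosSemidef := by
  have hH := hB.1
  set U : Matrix (Fin d) (Fin d) ℂ := (hH.eigenvectorUnitary : Matrix (Fin d) (Fin d) ℂ) with hUdef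
  have hUU : U * star U = 1 := (Matrix.mem_unitaryGroup_iff).mp hH.eigenvectorUnitary.2
  have hspec := hH.spectral_theorem
  set V := tensorPow U n with hV
  have hVV : V * Vᴴ = 1 := by
    rw [hV, ← Matrix.star_eq_conjTranspose, ← tensorPow_star, tensorPow_mul, hUU, tensorPow_one]
  have hBn : tensorPow B n = V * Matrix.diagonal (fun x : Fin n → Fin d =>
      ∏ k, ((hH.eigenvalues (x k) : ℂ))) * Vᴴ := by
    conv_lhs => rw [hspec, Unitary.conjStarAlgAut_apply]
    rw [hV, ← hUdef, ← Matrix.star_eq_conjTranspose, ← tensorPow_star,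
      ← tensorPow_mul, ← tensorPow_mul, tensorPow_diagonal]
    rfl
  have key : ((t : ℂ)^n) • (1 : Matrix (Fin n → Fin d) (Fin n → Fin d) ℂ) - tensorPow B n =
      V * Matrix.diagonal (fun x : Fin n → Fin d =>
        (((t^n - ∏ k, hH.eigenvalues (x k) : ℝ)) : ℂ)) * Vᴴ := by
    have h1 : ((t : ℂ)^n) • (1 : Matrix (Fin n → Fin d) (Fin n → Fin d) ℂ) =
        V * (((t : ℂ)^n) • 1) * Vᴴ := by
      rw [Matrix.mul_smul, Matrix.mul_one, Matrix.smul_mul, hVV]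
    rw [h1, hBn, ← Matrix.sub_mul, ← Matrix.mul_sub]
    congr 2
    rw [Matrix.smul_one_eq_diagonal, Matrix.diagonal_sub]
    congr 1
    funext x
    push_cast
    ring
  rw [key]
  apply Matrix.PosSemidef.mul_mul_conjTranspose_same
  refine Matrix.posSemidef_diagonal_iff.mpr fun x => ?_
  refine Complex.zero_le_real.mpr (sub_nonneg.mpr ?_)
  calc ∏ k, hH.eigenvalues (x k) ≤ ∏ _k : Fin n, t :=
        Finset.prod_le_prod (fun k _ => hB.eigenvalues_nonneg _) (fun k _ => ht _)
    _ = t ^ n := by simp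

section Proj
variable {d : ℕ}

/-- matrix of the orthogonal projection onto `K`. -/
noncomputable def projMat (K : Submodule ℂ (EuclideanSpace ℂ (Fin d))) : Matrix (Fin d) (Fin d) ℂ :=
  Matrix.toEuclideanLin.symm ((K.subtypeL ∘L Submodule.orthogonalProjectionOnto K :
    EuclideanSpace ℂ (Fin d) →L[ℂ] EuclideanSpace ℂ (Fin d)) :
    EuclideanSpace ℂ (Fin d) →ₗ[ℂ] EuclideanSpace ℂ (Fin d))

lemma projMat_mulVec (K : Submodule ℂ (EuclideanSpace ℂ (Fin d))) (v : Fin d → ℂ) :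
    projMat K *ᵥ v = (WithLp.equiv 2 (Fin d → ℂ))
      ((Submodule.orthogonalProjectionOnto K ((WithLp.equiv 2 (Fin d → ℂ)).symm v) : EuclideanSpace ℂ (Fin d))) := by
  have h := Matrix.toEuclideanLin_apply_piLp_toLp (projMat K) v
  rw [projMat, LinearEquiv.apply_symm_apply] at h
  exact congrArg (WithLp.equiv 2 (Fin d → ℂ)) h.symm

lemma projMat_isHermitian (K : Submodule ℂ (EuclideanSpace ℂ (Fin d))) :
    (projMat K).IsHermitian := by
  rw [Matrix.isHermitian_iff_isSymmetric, projMat, LinearEquiv.apply_symm_apply]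
  exact Submodule.starProjection_isSymmetric K

end Proj

section Pair
variable {d : ℕ}

local notation "e" => WithLp.equiv 2 ((Fin d) → ℂ)

lemma proj_norm_le (K : Submodule ℂ (EuclideanSpace ℂ (Fin d)))
    (x : EuclideanSpace ℂ (Fin d)) : ‖(Submodule.orthogonalProjectionOnto K x : EuclideanSpace ℂ (Fin d))‖ ≤ ‖x‖ := by
  have h := Submodule.norm_sq_eq_add_norm_sq_projection x K
  have e1 : ‖(Submodule.orthogonalProjectionOnto K x : EuclideanSpace ℂ (Fin d))‖ = ‖Submodule.orthogonalProjectionOnto K x‖ := rfl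
  have e2 : ‖(Submodule.orthogonalProjectionOnto Kᗮ x : EuclideanSpace ℂ (Fin d))‖ = ‖Submodule.orthogonalProjectionOnto Kᗮ x‖ := rfl
  nlinarith [norm_nonneg (Submodule.orthogonalProjectionOnto Kᗮ x : EuclideanSpace ℂ (Fin d)),
    norm_nonneg (Submodule.orthogonalProjectionOnto K x : EuclideanSpace ℂ (Fin d)), norm_nonneg x]

lemma mem_of_norm_proj_eq (K : Submodule ℂ (EuclideanSpace ℂ (Fin d)))
    (x : EuclideanSpace ℂ (Fin d))
    (h : ‖(Submodule.orthogonalProjectionOnto K x : EuclideanSpace ℂ (Fin d))‖ = ‖x‖) : x ∈ K := by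
  have h2 := Submodule.norm_sq_eq_add_norm_sq_projection x K
  have h2' : ‖x‖ ^ 2 = ‖(Submodule.orthogonalProjectionOnto K x : EuclideanSpace ℂ (Fin d))‖ ^ 2
      + ‖(Submodule.orthogonalProjectionOnto Kᗮ x : EuclideanSpace ℂ (Fin d))‖ ^ 2 := h2
  have h' : ‖(Submodule.orthogonalProjectionOnto K x : EuclideanSpace ℂ (Fin d))‖ ^ 2 = ‖x‖ ^ 2 := by rw [h]
  have hsq : ‖(Submodule.orthogonalProjectionOnto Kᗮ x : EuclideanSpace ℂ (Fin d))‖ ^ 2 = 0 := by linarith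
  have h3 : ‖(Submodule.orthogonalProjectionOnto Kᗮ x : EuclideanSpace ℂ (Fin d))‖ = 0 := by
    simpa using pow_eq_zero_iff (n := 2) (by norm_num) |>.mp hsq
  have h4 : (Submodule.orthogonalProjectionOnto Kᗮ x : EuclideanSpace ℂ (Fin d)) = 0 := by
    simpa using h3
  have h5 := Submodule.starProjection_add_starProjection_orthogonal (K := K) x
  rw [← Submodule.coe_orthogonalProjectionOnto_apply, ← Submodule.coe_orthogonalProjectionOnto_apply,
    h4, add_zero] at h5
  rw [← h5]
  exact (Submodule.orthogonalProjectionOnto K x).2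

lemma dot_self_eq {ι : Type*} [Fintype ι] (a : ι → ℂ) :
    star a ⬝ᵥ a = ((‖(WithLp.equiv 2 (ι → ℂ)).symm a‖ : ℂ)) ^ 2 := by
  rw [dotProduct_comm, ← EuclideanSpace.inner_toLp_toLp, inner_self_eq_norm_sq_to_K]
  norm_cast

lemma abs_dot_le {ι : Type*} [Fintype ι] (a b : ι → ℂ) :
    ‖star a ⬝ᵥ b‖
      ≤ ‖(WithLp.equiv 2 (ι → ℂ)).symm a‖ * ‖(WithLp.equiv 2 (ι → ℂ)).symm b‖ := by
  rw [dotProduct_comm, ← EuclideanSpace.inner_toLp_toLp]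
  exact norm_inner_le_norm (𝕜 := ℂ) _ _

lemma tensorPow_mulVec_norm_le {d : ℕ} (C : Matrix (Fin d) (Fin d) ℂ) {t : ℝ} (ht0 : 0 ≤ t)
    (hts : ∀ i, (Matrix.posSemidef_conjTranspose_mul_self C).1.eigenvalues i ≤ t)
    (n : ℕ) (v : (Fin n → Fin d) → ℂ) :
    ‖(WithLp.equiv 2 ((Fin n → Fin d) → ℂ)).symm (tensorPow C n *ᵥ v)‖
      ≤ Real.sqrt t ^ n * ‖(WithLp.equiv 2 ((Fin n → Fin d) → ℂ)).symm v‖ := by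
  have hB := Matrix.posSemidef_conjTranspose_mul_self C
  have hpsd := tensorPow_le_smul_one hB hts n
  have h0 := hpsd.dotProduct_mulVec_nonneg v
  rw [Matrix.sub_mulVec, Matrix.smul_mulVec, Matrix.one_mulVec, dotProduct_sub,
    dotProduct_smul, sub_nonneg] at h0
  have key : star (tensorPow C n *ᵥ v) ⬝ᵥ (tensorPow C n *ᵥ v)
      = star v ⬝ᵥ (tensorPow (Cᴴ * C) n *ᵥ v) := by
    rw [Matrix.star_mulVec, tensorPow_conjTranspose, ← Matrix.dotProduct_mulVec,
      Matrix.mulVec_mulVec, tensorPow_mul]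
  rw [← key, dot_self_eq, dot_self_eq] at h0
  set a := ‖(WithLp.equiv 2 ((Fin n → Fin d) → ℂ)).symm (tensorPow C n *ᵥ v)‖ with ha
  set b := ‖(WithLp.equiv 2 ((Fin n → Fin d) → ℂ)).symm v‖ with hb
  have hr : a ^ 2 ≤ t ^ n * b ^ 2 := by
    have : ((a ^ 2 : ℝ) : ℂ) ≤ ((t ^ n * b ^ 2 : ℝ) : ℂ) := by push_cast; simpa using h0
    exact_mod_cast this
  calc a = Real.sqrt (a ^ 2) := (Real.sqrt_sq (norm_nonneg _)).symm
    _ ≤ Real.sqrt (t ^ n * b ^ 2) := Real.sqrt_le_sqrt hr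
    _ = Real.sqrt t ^ n * b := by
        have hsp : Real.sqrt (t ^ n) = Real.sqrt t ^ n := by
          rw [show t ^ n = (Real.sqrt t ^ n) ^ 2 by
            rw [← pow_mul, mul_comm, pow_mul, Real.sq_sqrt ht0]]
          exact Real.sqrt_sq (pow_nonneg (Real.sqrt_nonneg t) n)
        rw [Real.sqrt_mul (by positivity), Real.sqrt_sq (norm_nonneg _), hsp]

lemma pair_bound {d : ℕ} (hd : 0 < d) (K L : Submodule ℂ (EuclideanSpace ℂ (Fin d)))
    (hKL : K ⊓ L = ⊥) :
    ∃ c : ℝ, 0 ≤ c ∧ c < 1 ∧ ∀ (n : ℕ) (v : (Fin n → Fin d) → ℂ),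
      ‖(WithLp.equiv 2 ((Fin n → Fin d) → ℂ)).symm (tensorPow (projMat K * projMat L) n *ᵥ v)‖
        ≤ c ^ n * ‖(WithLp.equiv 2 ((Fin n → Fin d) → ℂ)).symm v‖ := by
  haveI : Nonempty (Fin d) := Fin.pos_iff_nonempty.mp hd
  set C := projMat K * projMat L with hC
  have hB : (Cᴴ * C).PosSemidef := Matrix.posSemidef_conjTranspose_mul_self C
  have hH := hB.1
  have hlt : ∀ i, hH.eigenvalues i < 1 := by
    intro i
    set v := hH.eigenvectorBasis i with hv
    have hnv : ‖v‖ = 1 := hH.eigenvectorBasis.orthonormal.1 i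
    have hdot : star ⇑v ⬝ᵥ ((Cᴴ * C) *ᵥ ⇑v) = star (C *ᵥ ⇑v) ⬝ᵥ (C *ᵥ ⇑v) := by
      rw [← Matrix.mulVec_mulVec, Matrix.star_mulVec, Matrix.dotProduct_mulVec]
    set w : EuclideanSpace ℂ (Fin d) :=
      (Submodule.orthogonalProjectionOnto K ((Submodule.orthogonalProjectionOnto L v : EuclideanSpace ℂ (Fin d))) :
        EuclideanSpace ℂ (Fin d)) with hw
    have hCv : C *ᵥ ⇑v = (WithLp.equiv 2 (Fin d → ℂ)) w := by
      rw [hC, ← Matrix.mulVec_mulVec, projMat_mulVec, projMat_mulVec]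
      rfl
    have heig := hH.eigenvalues_eq i
    rw [hdot, dot_self_eq, hCv, Equiv.symm_apply_apply] at heig
    have heig' : hH.eigenvalues i = ‖w‖ ^ 2 := by
      rw [heig]; norm_cast
    have h1 : ‖w‖ ≤ ‖(Submodule.orthogonalProjectionOnto L v : EuclideanSpace ℂ (Fin d))‖ := proj_norm_le _ _
    have h2 : ‖(Submodule.orthogonalProjectionOnto L v : EuclideanSpace ℂ (Fin d))‖ ≤ ‖v‖ := proj_norm_le _ _
    by_contra hge
    push_neg at hge
    have hw1 : ‖w‖ = 1 := by nlinarith [norm_nonneg w]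
    have hL1 : ‖(Submodule.orthogonalProjectionOnto L v : EuclideanSpace ℂ (Fin d))‖ = 1 := by
      nlinarith [norm_nonneg (Submodule.orthogonalProjectionOnto L v : EuclideanSpace ℂ (Fin d))]
    have hmemK : (Submodule.orthogonalProjectionOnto L v : EuclideanSpace ℂ (Fin d)) ∈ K :=
      mem_of_norm_proj_eq K _ (by rw [hw1, hL1])
    have hmemL : (Submodule.orthogonalProjectionOnto L v : EuclideanSpace ℂ (Fin d)) ∈ L :=
      (Submodule.orthogonalProjectionOnto L v).2
    have hKL' : (Submodule.orthogonalProjectionOnto L v : EuclideanSpace ℂ (Fin d)) ∈ K ⊓ L := ⟨hmemK, hmemL⟩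
    rw [hKL, Submodule.mem_bot] at hKL'
    rw [hKL'] at hL1
    simp at hL1
  set t := Finset.univ.sup' Finset.univ_nonempty hH.eigenvalues with htdef
  have hts : ∀ i, hH.eigenvalues i ≤ t := fun i => Finset.le_sup' _ (Finset.mem_univ i)
  have ht0 : 0 ≤ t := le_trans (hB.eigenvalues_nonneg (Classical.arbitrary (Fin d))) (hts _)
  have ht1 : t < 1 := (Finset.sup'_lt_iff _).mpr fun i _ => hlt i
  refine ⟨Real.sqrt t, Real.sqrt_nonneg t, ?_, fun n v => ?_⟩
  · rw [show (1 : ℝ) = Real.sqrt 1 by simp]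
    exact Real.sqrt_lt_sqrt ht0 ht1
  · exact tensorPow_mulVec_norm_le C ht0 hts n v


/-- if the supports of the density matrices intersect
pairwise trivially, then for all sufficiently large `n` the supports of the
tensor powers `ρ_i^{⊗n}` form a linearly independent family of subspaces
(their sum is direct). -/
theorem tensor_pow_ranges_independent {d r : ℕ}
    (ρ : Fin r → Matrix (Fin d) (Fin d) ℂ)
    (hρ : ∀ i, IsDensity (ρ i))
    (hLI : ∀ i j, i ≠ j → matRange (ρ i) ⊓ matRange (ρ j) = ⊥) :
    ∃ N : ℕ, ∀ n ≥ N,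
      ∀ x : Fin r → ((Fin n → Fin d) → ℂ),
        (∀ i, x i ∈ matRange (tensorPow (ρ i) n)) →
        (∑ i, x i = 0) →
        ∀ i, x i = 0 := by
  rcases Nat.eq_zero_or_pos r with hr | hr
  · subst hr; exact ⟨0, fun n _ x _ _ i => i.elim0⟩
  rcases Nat.eq_zero_or_pos d with hd | hd
  · exfalso
    obtain ⟨i⟩ : Nonempty (Fin r) := Fin.pos_iff_nonempty.mp hr
    have htr := (hρ i).2
    subst hd
    simp [Matrix.trace] at htr
  -- the supports, inside Euclidean space
  set K : Fin r → Submodule ℂ (EuclideanSpace ℂ (Fin d)) :=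
    fun i => (matRange (ρ i)).comap
      (WithLp.linearEquiv 2 ℂ (Fin d → ℂ) : WithLp 2 (Fin d → ℂ) →ₗ[ℂ] Fin d → ℂ) with hK
  have hKbot : ∀ i j, i ≠ j → K i ⊓ K j = ⊥ := by
    intro i j hij
    rw [hK]
    simp only [← Submodule.comap_inf, hLI i j hij]
    rw [Submodule.comap_bot]
    exact LinearEquiv.ker _
  -- projections absorb the densities
  have habs : ∀ i, projMat (K i) * ρ i = ρ i := by
    intro i
    have hcol : ∀ (v : Fin d → ℂ), projMat (K i) *ᵥ (ρ i *ᵥ v) = ρ i *ᵥ v := by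
      intro v
      rw [projMat_mulVec]
      have hm : (WithLp.equiv 2 (Fin d → ℂ)).symm (ρ i *ᵥ v) ∈ K i := by
        rw [hK]
        exact Submodule.mem_comap.mpr ⟨v, rfl⟩
      rw [Submodule.coe_orthogonalProjectionOnto_apply, Submodule.starProjection_eq_self_iff.mpr hm]
      simp
    ext a b
    have h := congrFun (hcol (Pi.single b 1)) a
    rw [Matrix.mulVec_single] at h
    simpa [Matrix.mul_apply, Matrix.mulVec, dotProduct] using h
  -- per-pair constants
  have H : ∀ i j, ∃ c : ℝ, 0 ≤ c ∧ c < 1 ∧ (i ≠ j → ∀ (n : ℕ) (v : (Fin n → Fin d) → ℂ),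
      ‖(WithLp.equiv 2 ((Fin n → Fin d) → ℂ)).symm
          (tensorPow (projMat (K i) * projMat (K j)) n *ᵥ v)‖
        ≤ c ^ n * ‖(WithLp.equiv 2 ((Fin n → Fin d) → ℂ)).symm v‖) := by
    intro i j
    by_cases hij : i = j
    · exact ⟨0, le_rfl, zero_lt_one, fun h => absurd hij h⟩
    · obtain ⟨c, h0, h1, hb⟩ := pair_bound hd (K i) (K j) (hKbot _ _ hij)
      exact ⟨c, h0, h1, fun _ => hb⟩
  choose c hc0 hc1 hcb using H
  have hev : ∀ᶠ n in atTop, ∀ i j, c i j ^ n < 1 / (r : ℝ) := by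
    rw [eventually_all]; intro i; rw [eventually_all]; intro j
    exact (tendsto_pow_atTop_nhds_zero_of_lt_one (hc0 i j) (hc1 i j)).eventually_lt_const
      (by positivity)
  obtain ⟨N, hN⟩ := eventually_atTop.mp hev
  refine ⟨N, fun n hn x hmem hsum => ?_⟩
  set g : Fin r → ℝ := fun j => ‖(WithLp.equiv 2 ((Fin n → Fin d) → ℂ)).symm (x j)‖ with hg
  have habs' : ∀ i, tensorPow (projMat (K i)) n *ᵥ x i = x i := by
    intro i
    obtain ⟨u, hu⟩ := hmem i
    rw [Matrix.mulVecLin_apply] at hu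
    rw [← hu, Matrix.mulVec_mulVec, tensorPow_mul, habs i]
  have hpair : ∀ i j, i ≠ j →
      ‖star (x i) ⬝ᵥ x j‖ ≤ c i j ^ n * (g i * g j) := by
    intro i j hij
    have heq : star (x i) ⬝ᵥ x j
        = star (x i) ⬝ᵥ (tensorPow (projMat (K i) * projMat (K j)) n *ᵥ x j) := by
      conv_lhs => rw [← habs' i, ← habs' j]
      rw [Matrix.star_mulVec, tensorPow_conjTranspose, (projMat_isHermitian (K i)).eq,
        ← Matrix.dotProduct_mulVec, Matrix.mulVec_mulVec, tensorPow_mul]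
    rw [heq]
    calc ‖star (x i) ⬝ᵥ (tensorPow (projMat (K i) * projMat (K j)) n *ᵥ x j)‖
        ≤ g i * ‖(WithLp.equiv 2 ((Fin n → Fin d) → ℂ)).symm
            (tensorPow (projMat (K i) * projMat (K j)) n *ᵥ x j)‖ := abs_dot_le _ _
      _ ≤ g i * (c i j ^ n * g j) := by
          exact mul_le_mul_of_nonneg_left (hcb i j hij n (x j)) (norm_nonneg _)
      _ = c i j ^ n * (g i * g j) := by ring
  -- pick the max
  obtain ⟨i0, -, hmax⟩ := Finset.exists_max_image Finset.univ g
    ⟨⟨0, hr⟩, Finset.mem_univ _⟩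
  have hmax' : ∀ j, g j ≤ g i0 := fun j => hmax j (Finset.mem_univ j)
  have hg0 : ∀ j, 0 ≤ g j := fun j => norm_nonneg _
  have hdot0 : star (x i0) ⬝ᵥ (∑ j, x j) = 0 := by rw [hsum, dotProduct_zero]
  have hsplit : star (x i0) ⬝ᵥ (∑ j, x j) = ∑ j, star (x i0) ⬝ᵥ x j := by
    simp only [dotProduct, Finset.sum_apply, Finset.mul_sum]
    exact Finset.sum_comm
  rw [hsplit, ← Finset.add_sum_erase Finset.univ _ (Finset.mem_univ i0)] at hdot0
  have hneg : star (x i0) ⬝ᵥ x i0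
      = - ∑ j ∈ Finset.univ.erase i0, star (x i0) ⬝ᵥ x j :=
    eq_neg_of_add_eq_zero_left hdot0
  have h1 : (g i0 ^ 2 : ℝ) = ‖star (x i0) ⬝ᵥ x i0‖ := by
    rw [dot_self_eq]
    rw [norm_pow, Complex.norm_real, Real.norm_of_nonneg (hg0 i0)]
  have hstep : ‖star (x i0) ⬝ᵥ x i0‖ ≤ ((r : ℝ) - 1) * ((1 / r) * g i0 ^ 2) := by
    rw [hneg, norm_neg]
    calc ‖∑ j ∈ Finset.univ.erase i0, star (x i0) ⬝ᵥ x j‖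
        ≤ ∑ j ∈ Finset.univ.erase i0, ‖star (x i0) ⬝ᵥ x j‖ :=
          norm_sum_le _ _
      _ ≤ ∑ j ∈ Finset.univ.erase i0, (1 / (r : ℝ)) * g i0 ^ 2 := by
          refine Finset.sum_le_sum fun j hj => ?_
          have hij : i0 ≠ j := (Finset.ne_of_mem_erase hj).symm
          refine le_trans (hpair i0 j hij) ?_
          have hcn : c i0 j ^ n ≤ 1 / (r : ℝ) := (hN n hn i0 j).le
          have : g i0 * g j ≤ g i0 ^ 2 := by nlinarith [hmax' j, hg0 j, hg0 i0]
          have h2 : (0:ℝ) ≤ g i0 * g j := mul_nonneg (hg0 _) (hg0 _)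
          calc c i0 j ^ n * (g i0 * g j) ≤ (1 / (r : ℝ)) * (g i0 * g j) :=
                mul_le_mul_of_nonneg_right hcn h2
            _ ≤ (1 / (r : ℝ)) * g i0 ^ 2 := by
                refine mul_le_mul_of_nonneg_left this (by positivity)
      _ = ((r : ℝ) - 1) * ((1 / r) * g i0 ^ 2) := by
          rw [Finset.sum_const, Finset.card_erase_of_mem (Finset.mem_univ i0),
            Finset.card_univ, Fintype.card_fin, nsmul_eq_mul, Nat.cast_sub hr]
          push_cast
          ring
  have hsq : g i0 ^ 2 ≤ ((r : ℝ) - 1) * ((1 / r) * g i0 ^ 2) := h1.trans_le hstep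
  have hrpos : (0:ℝ) < r := by exact_mod_cast hr
  have hk : ((r : ℝ) - 1) * (1 / r) < 1 := by
    rw [mul_one_div, div_lt_one hrpos]; linarith
  rw [← mul_assoc] at hsq
  have hsq2 : g i0 ^ 2 = 0 := by nlinarith [hsq, hk, sq_nonneg (g i0)]
  have hgz : g i0 = 0 := by
    simpa using pow_eq_zero_iff (n := 2) (by norm_num) |>.mp hsq2
  intro i
  have : g i = 0 := le_antisymm (hgz ▸ hmax' i) (hg0 i)
  have hx : (WithLp.equiv 2 ((Fin n → Fin d) → ℂ)).symm (x i) = 0 := norm_eq_zero.mp this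
  simpa using congrArg (WithLp.equiv 2 ((Fin n → Fin d) → ℂ)) hx
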